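/- Let ε > 0, p ∈ [1,∞), β ∈ (0,1) with β ≤ 1 − (2+ε)/p, and R > 0. Let Ω = {(x, y) ∈ ℝ² : x > |y|^{1+ε}} and let B_R denote the open ball of radius R centered at the origin in ℝ². Then the function (x, y) ↦ |y|^{β−1} is not in L_p(Ω ∩ B_R); equivalently, ∫_{Ω ∩ B_R} |y|^{(β−1)p} dx dy = ∞. -/

import Mathlib

open MeasureTheory Set

/-- One-dimensional divergence: `∫_0^δ y^r dy = ∞` when `r ≤ -1`. -/
lemma cusp_aux_one_dim {r δ : ℝ} (hr : r ≤ -1) (hδ : 0 < δ) :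
    ∫⁻ y in Set.Ioo (0 : ℝ) δ, ENNReal.ofReal (y ^ r) = ⊤ := by
  by_contra h
  have hmeas : AEStronglyMeasurable (fun y : ℝ => y ^ r)
      (volume.restrict (Set.Ioo (0 : ℝ) δ)) :=
    (measurable_id.pow_const r).aestronglyMeasurable
  have hnn : 0 ≤ᵐ[volume.restrict (Set.Ioo (0 : ℝ) δ)] fun y : ℝ => y ^ r := by
    filter_upwards [ae_restrict_mem measurableSet_Ioo] with y hy
    exact Real.rpow_nonneg hy.1.le r
  have hint : IntegrableOn (fun y : ℝ => y ^ r) (Set.Ioo (0 : ℝ) δ) := by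
    rw [IntegrableOn, ← lintegral_ofReal_ne_top_iff_integrable hmeas hnn]
    exact h
  rw [intervalIntegral.integrableOn_Ioo_rpow_iff hδ] at hint
  linarith

theorem cusp_counterexample_not_Lp (ε p β R : ℝ) (hε : 0 < ε) (hp : 1 ≤ p)
    (hβ0 : 0 < β) (hβ1 : β < 1) (hβp : β ≤ 1 - (2 + ε) / p) (hR : 0 < R)
    (Ω : Set (EuclideanSpace ℝ (Fin 2)))
    (hΩ : Ω = {v : EuclideanSpace ℝ (Fin 2) | |v 1| ^ (1 + ε) < v 0}) :
    ¬ MemLp (fun v : EuclideanSpace ℝ (Fin 2) => |v 1| ^ (β - 1))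
        (ENNReal.ofReal p)
        (volume.restrict (Ω ∩ Metric.ball (0 : EuclideanSpace ℝ (Fin 2)) R)) ∧
    ∫⁻ v in Ω ∩ Metric.ball (0 : EuclideanSpace ℝ (Fin 2)) R,
        ENNReal.ofReal (|v 1| ^ ((β - 1) * p)) = ⊤ := by
  have hp0 : 0 < p := lt_of_lt_of_le one_pos hp
  set q : ℝ := (β - 1) * p with hq
  have hqle : q ≤ -(2 + ε) := by
    have h1 : β - 1 ≤ -((2 + ε) / p) := by linarith
    have := mul_le_mul_of_nonneg_right h1 hp0.le
    calc q ≤ -((2 + ε) / p) * p := this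
      _ = -(2 + ε) := by field_simp
  -- the measurable equivalence to ℝ × ℝ
  set e : EuclideanSpace ℝ (Fin 2) ≃ᵐ ℝ × ℝ :=
    (MeasurableEquiv.toLp 2 (Fin 2 → ℝ)).symm.trans MeasurableEquiv.finTwoArrow with he
  have hmp : MeasurePreserving e volume volume :=
    (volume_preserving_finTwoArrow ℝ).comp
      (EuclideanSpace.volume_preserving_symm_measurableEquiv_toLp (Fin 2))
  set S := Ω ∩ Metric.ball (0 : EuclideanSpace ℝ (Fin 2)) R with hS
  set δ : ℝ := min (R / 3) 1 with hδdef
  have hδ0 : 0 < δ := lt_min (by linarith) one_pos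
  -- the test region inside `e '' S`
  set T : Set (ℝ × ℝ) := {z : ℝ × ℝ | (0 < z.2 ∧ z.2 < δ) ∧
    z.2 ^ (1 + ε) < z.1 ∧ z.1 < 2 * z.2 ^ (1 + ε)} with hT
  have hTsub : T ⊆ e '' S := by
    rintro ⟨x, y⟩ ⟨⟨hy0, hyδ⟩, hx1, hx2⟩
    refine ⟨e.symm (x, y), ?_, e.apply_symm_apply _⟩
    have hv0 : (e.symm (x, y)) 0 = x := rfl
    have hv1 : (e.symm (x, y)) 1 = y := rfl
    have hyε : y ^ (1 + ε) ≤ y := by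
      calc y ^ (1 + ε) ≤ y ^ (1 : ℝ) :=
            Real.rpow_le_rpow_of_exponent_ge hy0
              (le_trans hyδ.le (min_le_right _ _)) (by linarith)
        _ = y := Real.rpow_one y
    have hx0 : 0 < x := lt_trans (Real.rpow_pos_of_pos hy0 _) hx1
    constructor
    · rw [hΩ]
      simp only [Set.mem_setOf_eq, hv0, hv1]
      rwa [abs_of_pos hy0]
    · rw [mem_ball_zero_iff]
      have hnorm : ‖e.symm (x, y)‖ = Real.sqrt (x ^ 2 + y ^ 2) := by
        rw [EuclideanSpace.norm_eq, Fin.sum_univ_two, hv0, hv1,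
          Real.norm_eq_abs, Real.norm_eq_abs, sq_abs, sq_abs]
      rw [hnorm, show R = Real.sqrt (R ^ 2) by
        rw [Real.sqrt_sq hR.le]]
      apply Real.sqrt_lt_sqrt (by positivity)
      have hyR : y < R / 3 := lt_of_lt_of_le hyδ (min_le_left _ _)
      have hxR : x < 2 * (R / 3) := by
        calc x < 2 * y ^ (1 + ε) := hx2
          _ ≤ 2 * y := by linarith
          _ < 2 * (R / 3) := by linarith
      nlinarith
  have hTmeas : MeasurableSet T := by
    have h1 : Measurable fun z : ℝ × ℝ => z.2 ^ (1 + ε) :=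
      measurable_snd.pow_const _
    exact (((measurableSet_lt measurable_const measurable_snd).inter
        (measurableSet_lt measurable_snd measurable_const)).inter
      ((measurableSet_lt h1 measurable_fst).inter
        (measurableSet_lt measurable_fst (measurable_const.mul h1))))
  -- the function on ℝ × ℝ
  set F : ℝ × ℝ → ENNReal := fun z => ENNReal.ofReal (|z.2| ^ q) with hF
  have hFmeas : Measurable F :=
    ((measurable_snd.abs.pow_const q)).ennreal_ofReal
  -- the integral over T diverges
  have hTint : ∫⁻ z in T, F z = ⊤ := by
    rw [← lintegral_indicator hTmeas, Measure.volume_eq_prod,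
      lintegral_prod_symm' _ (hFmeas.indicator hTmeas)]
    have hinner : ∀ y : ℝ,
        (∫⁻ x, T.indicator F (x, y)) =
          (Ioo (0 : ℝ) δ).indicator
            (fun y => ENNReal.ofReal (y ^ q) * ENNReal.ofReal (y ^ (1 + ε))) y := by
      intro y
      by_cases hy : y ∈ Ioo (0 : ℝ) δ
      · rw [Set.indicator_of_mem hy]
        have : ∀ x : ℝ, T.indicator F (x, y) =
            (Ioo (y ^ (1 + ε)) (2 * y ^ (1 + ε))).indicator
              (fun _ => ENNReal.ofReal (y ^ q)) x := by
          intro x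
          by_cases hx : x ∈ Ioo (y ^ (1 + ε)) (2 * y ^ (1 + ε))
          · rw [Set.indicator_of_mem hx,
              Set.indicator_of_mem (show (x, y) ∈ T from ⟨⟨hy.1, hy.2⟩, hx.1, hx.2⟩)]
            simp [hF, abs_of_pos hy.1]
          · rw [Set.indicator_of_notMem hx, Set.indicator_of_notMem]
            rintro ⟨-, h1, h2⟩
            exact hx ⟨h1, h2⟩
        simp_rw [this]
        rw [lintegral_indicator_const measurableSet_Ioo, Real.volume_Ioo]
        congr 1
        ring_nf
      · rw [Set.indicator_of_notMem hy]
        have : ∀ x : ℝ, T.indicator F (x, y) = 0 := by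
          intro x
          apply Set.indicator_of_notMem
          rintro ⟨⟨h1, h2⟩, -⟩
          exact hy ⟨h1, h2⟩
        simp_rw [this, lintegral_zero]
    simp_rw [hinner]
    rw [lintegral_indicator measurableSet_Ioo]
    have : ∀ᵐ y ∂(volume.restrict (Ioo (0 : ℝ) δ)),
        ENNReal.ofReal (y ^ q) * ENNReal.ofReal (y ^ (1 + ε)) =
          ENNReal.ofReal (y ^ (q + (1 + ε))) := by
      filter_upwards [ae_restrict_mem measurableSet_Ioo] with y hy
      rw [← ENNReal.ofReal_mul (Real.rpow_nonneg hy.1.le _),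
        ← Real.rpow_add hy.1]
    rw [lintegral_congr_ae this]
    exact cusp_aux_one_dim (by linarith) hδ0
  -- transfer to the Euclidean side
  have key : ∫⁻ v in S, ENNReal.ofReal (|v 1| ^ q) = ⊤ := by
    have himg : ∫⁻ v in S, F (e v) = ∫⁻ z in e '' S, F z :=
      hmp.setLIntegral_comp_emb e.measurableEmbedding F S
    have hFe : ∀ v : EuclideanSpace ℝ (Fin 2), F (e v) = ENNReal.ofReal (|v 1| ^ q) :=
      fun v => rfl
    simp_rw [← hFe]
    rw [himg, eq_top_iff, ← hTint]
    exact lintegral_mono_set hTsub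
  refine ⟨?_, key⟩
  intro hmem
  have hPnz : ENNReal.ofReal p ≠ 0 := by
    simp only [ne_eq, ENNReal.ofReal_eq_zero, not_le]; linarith
  have hPnt : ENNReal.ofReal p ≠ ⊤ := ENNReal.ofReal_ne_top
  have h1 := hmem.2
  rw [eLpNorm_eq_lintegral_rpow_enorm_toReal hPnz hPnt] at h1
  rw [ENNReal.toReal_ofReal hp0.le] at h1
  have h2 : (∫⁻ v in S, ‖|v 1| ^ (β - 1)‖ₑ ^ p) < ⊤ := by
    have := (ENNReal.rpow_lt_top_iff_of_pos (y := 1 / p) (by positivity)).1 h1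
    exact this
  have h3 : ∀ v : EuclideanSpace ℝ (Fin 2),
      ‖|v 1| ^ (β - 1)‖ₑ ^ p = ENNReal.ofReal (|v 1| ^ q) := by
    intro v
    rw [Real.enorm_eq_ofReal (Real.rpow_nonneg (abs_nonneg _) _),
      ENNReal.ofReal_rpow_of_nonneg (Real.rpow_nonneg (abs_nonneg _) _) hp0.le,
      ← Real.rpow_mul (abs_nonneg _)]
  simp_rw [h3] at h2
  rw [key] at h2
  exact absurd h2 (by simp)
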